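/- arXiv:math/0602489 — 3 statements merged into one kernel-verified Lean document; each statement's English description precedes it below -/
import Mathlib

section
/- Let (A^•, d) be a cochain complex of real vector spaces with a right action of a group G by degree-preserving linear maps commuting with d. Let ω ∈ A^m be G-invariant and exact, let 1 ≤ p ≤ m−1, and assume the complex (A^•, d) is exact in degrees m−p, …, m−1 (every closed element of A^q is exact for q = m−p, …, m−1). Then there exist cochains φ_i ∈ C^i(G, A^{m−i−1}) for i = 0, …, p such that ω = −d φ_0 and δ'φ_{i−1} + δ''φ_i = 0 for i = 1, …, p. Consequently ω + δ(φ_0 + ⋯ + φ_p) = δ'φ_p, and every value δ'φ_p(g_1,…,g_{p+1}) ∈ A^{m−p−1} is closed: d(δ'φ_p(g_1,…,g_{p+1})) = 0 for all g_1,…,g_{p+1} ∈ G. -/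
open scoped BigOperators

/-- Merge the `i`-th and `(i+1)`-st entries of a tuple of group elements by multiplication:
this produces the argument tuple `(g₁, …, g_i g_{i+1}, …, g_{p+1})` (0-indexed). -/
def mulIns {G : Type*} [Mul G] {p : ℕ} (g : Fin (p + 1) → G) (i : Fin p) : Fin p → G :=
  fun j =>
    if (j : ℕ) < (i : ℕ) then g j.castSucc
    else if (j : ℕ) = (i : ℕ) then g j.castSucc * g j.succ
    else g j.succ

/-- `δ'` : the differential of the standard complex of nonhomogeneous cochains of a group
`G` with values in a right `G`-module `A` (the right action being `act`):
`(Df)(g₁,…,g_{p+1}) = f(g₂,…,g_{p+1}) + ∑ (-1)^i f(g₁,…,g_i g_{i+1},…,g_{p+1})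
  + (-1)^{p+1} f(g₁,…,g_p)·g_{p+1}`. -/
def gd {G : Type*} [Mul G] {A : Type*} [AddCommGroup A] [Module ℝ A]
    (act : G → A →ₗ[ℝ] A) {p : ℕ} (f : (Fin p → G) → A) :
    (Fin (p + 1) → G) → A :=
  fun g =>
    f (Fin.tail g)
      + ∑ i : Fin p, ((-1 : ℝ) ^ ((i : ℕ) + 1)) • f (mulIns g i)
      + ((-1 : ℝ) ^ (p + 1)) • act (g (Fin.last p)) (f (Fin.init g))

/-- `δ''` : the second differential on `C^p(G, A^q)`,
`(δ''c)(g₁,…,g_p) = (−1)^p d (c (g₁,…,g_p))`. -/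
def gdd {G : Type*} {A : ℤ → Type*} [∀ q, AddCommGroup (A q)] [∀ q, Module ℝ (A q)]
    (d : ∀ q, A q →ₗ[ℝ] A (q + 1)) {p : ℕ} {q : ℤ} (c : (Fin p → G) → A q) :
    (Fin p → G) → A (q + 1) :=
  fun g => ((-1 : ℝ) ^ p) • d q (c g)

/-- Transport an element of a graded family along an equality of degrees. -/
def tr {A : ℤ → Type*} {q q' : ℤ} (h : q = q') (a : A q) : A q' := h ▸ a
section AuxFin

lemma val_succAbove {n : ℕ} (p : Fin (n+1)) (i : Fin n) :
    (p.succAbove i : ℕ) = if (i : ℕ) < (p : ℕ) then (i : ℕ) else (i : ℕ) + 1 := by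
  rcases Nat.lt_or_ge (i : ℕ) (p : ℕ) with h | h
  · rw [Fin.succAbove_of_castSucc_lt _ _ (by simpa [Fin.lt_def] using h), if_pos h]; rfl
  · rw [Fin.succAbove_of_le_castSucc _ _ (by simpa [Fin.le_def] using h), if_neg (by omega)]; rfl

lemma succAbove_succAbove_swap {n : ℕ} (u v : ℕ) (h : v < u) (hu : u < n+2) (hv : v < n+1)
    (k : Fin n) :
    (⟨u, hu⟩ : Fin (n+2)).succAbove ((⟨v, hv⟩ : Fin (n+1)).succAbove k)
      = (⟨v, by omega⟩ : Fin (n+2)).succAbove ((⟨u-1, by omega⟩ : Fin (n+1)).succAbove k) := by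
  have hk := k.isLt
  apply Fin.ext
  simp only [val_succAbove]
  split_ifs <;> simp_all <;> omega

end AuxFin

section AuxGd

variable {G : Type*} {A : Type*} [AddCommGroup A] [Module ℝ A]

def DD {n : ℕ} (F : (Fin (n+1) → G) → A) : (Fin (n+2) → G) → A :=
  fun x => ∑ j : Fin (n+2), ((-1:ℝ) ^ (j : ℕ)) • F (x ∘ j.succAbove)

def invo {n : ℕ} (z : Fin (n+3) × Fin (n+2)) : Fin (n+3) × Fin (n+2) :=
  if h : (z.2 : ℕ) < (z.1 : ℕ)
  then (⟨(z.2:ℕ), by have := z.2.isLt; omega⟩, ⟨(z.1:ℕ)-1, by have := z.1.isLt; omega⟩)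
  else (⟨(z.2:ℕ)+1, by have := z.2.isLt; omega⟩, ⟨(z.1:ℕ), by have := z.2.isLt; omega⟩)

lemma invo_lt {n : ℕ} (a : Fin (n+3)) (b : Fin (n+2)) (h : (b : ℕ) < (a : ℕ)) :
    invo (a, b) = (⟨(b:ℕ), by have := b.isLt; omega⟩, ⟨(a:ℕ)-1, by have := a.isLt; omega⟩) := by
  rw [invo, dif_pos h]

lemma invo_ge {n : ℕ} (a : Fin (n+3)) (b : Fin (n+2)) (h : ¬ ((b : ℕ) < (a : ℕ))) :
    invo (a, b) = (⟨(b:ℕ)+1, by have := b.isLt; omega⟩, ⟨(a:ℕ), by have := b.isLt; omega⟩) := by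
  rw [invo, dif_neg h]

lemma invo_invo {n : ℕ} (z : Fin (n+3) × Fin (n+2)) : invo (invo z) = z := by
  rcases z with ⟨a, b⟩
  have ha := a.isLt
  have hb := b.isLt
  by_cases h : (b:ℕ) < (a:ℕ)
  · rw [invo_lt _ _ h, invo_ge _ _ (by simp; omega)]
    ext <;> simp <;> omega
  · rw [invo_ge _ _ h, invo_lt _ _ (by simp; omega)]
    ext <;> simp <;> omega

lemma invo_ne {n : ℕ} (z : Fin (n+3) × Fin (n+2)) : invo z ≠ z := by
  rcases z with ⟨a, b⟩
  by_cases h : (b:ℕ) < (a:ℕ)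
  · rw [invo_lt _ _ h]
    intro heq
    have := congrArg (fun w => ((w.1 : Fin (n+3)) : ℕ)) heq
    simp at this
    omega
  · rw [invo_ge _ _ h]
    intro heq
    have := congrArg (fun w => ((w.1 : Fin (n+3)) : ℕ)) heq
    simp at this
    omega

lemma DD_DD {n : ℕ} (F : (Fin (n+1) → G) → A) (x : Fin (n+3) → G) : DD (DD F) x = 0 := by
  have key2 : ∀ u v : ℕ, v < u → ∀ (hu : u < n+3) (hv : v < n+2),
      ((-1:ℝ)) ^ (u + v) • F (x ∘ (⟨u, hu⟩ : Fin (n+3)).succAbove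
          ∘ (⟨v, hv⟩ : Fin (n+2)).succAbove)
        + ((-1:ℝ)) ^ (v + (u-1)) • F (x ∘ (⟨v, by omega⟩ : Fin (n+3)).succAbove
          ∘ (⟨u-1, by omega⟩ : Fin (n+2)).succAbove) = 0 := by
    intro u v h hu hv
    have harg : x ∘ (⟨u, hu⟩ : Fin (n+3)).succAbove ∘ (⟨v, hv⟩ : Fin (n+2)).succAbove
        = x ∘ (⟨v, by omega⟩ : Fin (n+3)).succAbove
            ∘ (⟨u-1, by omega⟩ : Fin (n+2)).succAbove := by
      funext k
      exact congrArg x (succAbove_succAbove_swap u v h hu hv k)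
    rw [harg, ← add_smul]
    convert zero_smul ℝ _
    have he : u + v = (v + (u-1)) + 1 := by omega
    rw [he, pow_succ]
    ring
  unfold DD
  simp only [Finset.smul_sum, smul_smul, ← pow_add]
  rw [← Finset.sum_product']
  refine Finset.sum_involution (fun z _ => invo z) ?_ (fun z _ _ => invo_ne z)
    (fun z _ => Finset.mem_univ _) (fun z _ => invo_invo z)
  rintro ⟨a, b⟩ -
  dsimp only
  by_cases h : (b:ℕ) < (a:ℕ)
  · rw [invo_lt _ _ h]
    have := key2 (a:ℕ) (b:ℕ) h a.isLt (by have := b.isLt; omega)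
    simpa [Fin.eta, Function.comp_assoc] using this
  · rw [invo_ge _ _ h]
    have := key2 ((b:ℕ)+1) (a:ℕ) (by omega) (by have := b.isLt; omega) (by have := b.isLt; omega)
    simp only [Nat.add_sub_cancel, Fin.eta] at this
    rw [add_comm]
    convert this using 2
    all_goals rfl

end AuxGd

section Homog

variable {G : Type*} [Group G] {A : Type*} [AddCommGroup A] [Module ℝ A]

def Psi (act : G → A →ₗ[ℝ] A) {p : ℕ} (f : (Fin p → G) → A) : (Fin (p+1) → G) → A :=
  fun x => act (x (Fin.last p)) (f (fun i => x i.castSucc * (x i.succ)⁻¹))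

lemma Psi_gd (act : G → A →ₗ[ℝ] A) (hmul : ∀ g h a, act (g * h) a = act h (act g a))
    {p : ℕ} (f : (Fin p → G) → A) (x : Fin (p+2) → G) :
    Psi act (gd act f) x = DD (Psi act f) x := by
  show act (x (Fin.last (p+1)))
      (gd act f (fun i : Fin (p+1) => x i.castSucc * (x i.succ)⁻¹)) = _
  set c : Fin (p+1) → G := fun i => x i.castSucc * (x i.succ)⁻¹ with hc
  have h0 : Psi act f (x ∘ (0 : Fin (p+2)).succAbove)
      = act (x (Fin.last (p+1))) (f (Fin.tail c)) := by
    show act ((x ∘ Fin.succAbove 0) (Fin.last p))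
        (f fun i => (x ∘ Fin.succAbove 0) i.castSucc * ((x ∘ Fin.succAbove 0) i.succ)⁻¹) = _
    rw [Fin.succAbove_zero]
    have e1 : (x ∘ Fin.succ) (Fin.last p) = x (Fin.last (p+1)) := congrArg x (Fin.succ_last p)
    have e2 : (fun i : Fin p => (x ∘ Fin.succ) i.castSucc * ((x ∘ Fin.succ) i.succ)⁻¹)
        = Fin.tail c := by
      funext i
      show x i.castSucc.succ * (x i.succ.succ)⁻¹ = c i.succ
      rw [hc]
      show x i.castSucc.succ * (x i.succ.succ)⁻¹ = x i.succ.castSucc * (x i.succ.succ)⁻¹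
      rw [Fin.succ_castSucc]
    rw [e1, e2]
  have hmid : ∀ i : Fin p,
      Psi act f (x ∘ (i.castSucc.succ : Fin (p+2)).succAbove)
        = act (x (Fin.last (p+1))) (f (mulIns c i)) := by
    intro i
    have hi := i.isLt
    show act ((x ∘ (i.castSucc.succ : Fin (p+2)).succAbove) (Fin.last p))
        (f fun k => (x ∘ (i.castSucc.succ : Fin (p+2)).succAbove) k.castSucc
          * ((x ∘ (i.castSucc.succ : Fin (p+2)).succAbove) k.succ)⁻¹) = _
    have e0 : (i.castSucc.succ : Fin (p+2)).succAbove (Fin.last p) = Fin.last (p+1) := by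
      apply Fin.ext
      rw [val_succAbove]
      simp only [Fin.val_last, Fin.val_succ, Fin.coe_castSucc]
      rw [if_neg (by omega)]
    have e1 : (x ∘ (i.castSucc.succ : Fin (p+2)).succAbove) (Fin.last p) = x (Fin.last (p+1)) :=
      congrArg x e0
    have e2 : (fun k : Fin p => (x ∘ (i.castSucc.succ : Fin (p+2)).succAbove) k.castSucc
        * ((x ∘ (i.castSucc.succ : Fin (p+2)).succAbove) k.succ)⁻¹) = mulIns c i := by
      funext k
      have hk := k.isLt
      show x ((i.castSucc.succ : Fin (p+2)).succAbove k.castSucc)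
          * (x ((i.castSucc.succ : Fin (p+2)).succAbove k.succ))⁻¹ = mulIns c i k
      rw [mulIns]
      rcases lt_trichotomy (k:ℕ) (i:ℕ) with hki | hki | hki
      · rw [if_pos hki]
        have i1 : (i.castSucc.succ : Fin (p+2)).succAbove k.castSucc = k.castSucc.castSucc := by
          apply Fin.ext; rw [val_succAbove]; simp only [Fin.coe_castSucc, Fin.val_succ]
          rw [if_pos (by omega)]
        have i2 : (i.castSucc.succ : Fin (p+2)).succAbove k.succ = k.succ.castSucc := by
          apply Fin.ext; rw [val_succAbove]; simp only [Fin.coe_castSucc, Fin.val_succ]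
          rw [if_pos (by omega)]
        rw [i1, i2]
        show _ = x k.castSucc.castSucc * (x k.castSucc.succ)⁻¹
        rw [Fin.succ_castSucc]
      · rw [if_neg (by omega), if_pos hki]
        have i1 : (i.castSucc.succ : Fin (p+2)).succAbove k.castSucc = k.castSucc.castSucc := by
          apply Fin.ext; rw [val_succAbove]; simp only [Fin.coe_castSucc, Fin.val_succ]
          rw [if_pos (by omega)]
        have i2 : (i.castSucc.succ : Fin (p+2)).succAbove k.succ = k.succ.succ := by
          apply Fin.ext; rw [val_succAbove]; simp only [Fin.coe_castSucc, Fin.val_succ]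
          rw [if_neg (by omega)]
        rw [i1, i2]
        show _ = (x k.castSucc.castSucc * (x k.castSucc.succ)⁻¹)
            * (x k.succ.castSucc * (x k.succ.succ)⁻¹)
        rw [Fin.succ_castSucc, mul_assoc, inv_mul_cancel_left]
      · rw [if_neg (by omega), if_neg (by omega)]
        have i1 : (i.castSucc.succ : Fin (p+2)).succAbove k.castSucc = k.castSucc.succ := by
          apply Fin.ext; rw [val_succAbove]; simp only [Fin.coe_castSucc, Fin.val_succ]
          rw [if_neg (by omega)]
        have i2 : (i.castSucc.succ : Fin (p+2)).succAbove k.succ = k.succ.succ := by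
          apply Fin.ext; rw [val_succAbove]; simp only [Fin.coe_castSucc, Fin.val_succ]
          rw [if_neg (by omega)]
        rw [i1, i2]
        show _ = x k.succ.castSucc * (x k.succ.succ)⁻¹
        rw [Fin.succ_castSucc]
    rw [e1, e2]
  have hlast : Psi act f (x ∘ ((Fin.last p).succ : Fin (p+2)).succAbove)
      = act (x (Fin.last (p+1))) (act (c (Fin.last p)) (f (Fin.init c))) := by
    show act ((x ∘ ((Fin.last p).succ : Fin (p+2)).succAbove) (Fin.last p))
        (f fun k => (x ∘ ((Fin.last p).succ : Fin (p+2)).succAbove) k.castSucc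
          * ((x ∘ ((Fin.last p).succ : Fin (p+2)).succAbove) k.succ)⁻¹) = _
    rw [Fin.succ_last, Fin.succAbove_last]
    have e2 : (fun k : Fin p => (x ∘ Fin.castSucc) k.castSucc
        * ((x ∘ Fin.castSucc) k.succ)⁻¹) = Fin.init c := by
      funext k
      show x k.castSucc.castSucc * (x k.succ.castSucc)⁻¹ = c k.castSucc
      rw [← Fin.succ_castSucc]
    rw [e2, ← hmul]
    have e3 : c (Fin.last p) * x (Fin.last (p+1)) = (x ∘ Fin.castSucc) (Fin.last p) := by
      show x (Fin.last p).castSucc * (x (Fin.last p).succ)⁻¹ * x (Fin.last (p+1))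
          = x ((Fin.last p).castSucc)
      rw [Fin.succ_last, inv_mul_cancel_right]
    rw [e3]
  rw [gd]
  rw [map_add, map_add, map_sum]
  rw [DD, Fin.sum_univ_succ, Fin.sum_univ_castSucc]
  rw [h0]
  simp only [map_smul]
  have hmid' : ∀ i : Fin p,
      ((-1:ℝ) ^ (((i.castSucc.succ : Fin (p+2))) : ℕ)) • Psi act f (x ∘ (i.castSucc.succ : Fin (p+2)).succAbove)
        = ((-1:ℝ) ^ ((i:ℕ)+1)) • act (x (Fin.last (p+1))) (f (mulIns c i)) := by
    intro i
    rw [hmid i]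
    congr 1
  rw [Finset.sum_congr rfl (fun i _ => hmid' i), hlast]
  have hv : (((Fin.last p).succ : Fin (p+2)) : ℕ) = p + 1 := by simp
  rw [hv]
  simp only [Fin.val_zero, pow_zero, one_smul]
  abel

theorem gd_gd (act : G → A →ₗ[ℝ] A) (hone : act 1 = LinearMap.id)
    (hmul : ∀ g h a, act (g * h) a = act h (act g a))
    {p : ℕ} (f : (Fin p → G) → A) (g : Fin (p+2) → G) : gd act (gd act f) g = 0 := by
  have hPsi : Psi act (gd act (gd act f)) = DD (DD (Psi act f)) := by
    funext y
    rw [Psi_gd act hmul (gd act f) y]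
    exact congrArg (fun F => DD F y) (funext fun z => Psi_gd act hmul f z)
  set s : Fin (p+3) → G := fun i => (((List.ofFn g).drop (i:ℕ)).prod) with hs
  have hlen : (List.ofFn g).length = p + 2 := List.length_ofFn
  have hstep : ∀ i : Fin (p+2), s i.castSucc = g i * s i.succ := by
    intro i
    have hi : (i:ℕ) < (List.ofFn g).length := by rw [hlen]; exact i.isLt
    show ((List.ofFn g).drop ((i.castSucc : Fin (p+3)):ℕ)).prod = _
    rw [Fin.coe_castSucc, List.drop_eq_getElem_cons hi, List.prod_cons, List.getElem_ofFn]
    rfl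
  have hc : (fun i : Fin (p+2) => s i.castSucc * (s i.succ)⁻¹) = g := by
    funext i
    rw [hstep i, mul_inv_cancel_right]
  have hlast : s (Fin.last (p+2)) = 1 := by
    show ((List.ofFn g).drop ((Fin.last (p+2)):ℕ)).prod = 1
    rw [Fin.val_last, List.drop_eq_nil_of_le (by rw [hlen]), List.prod_nil]
  have hfin := congrFun hPsi s
  rw [DD_DD] at hfin
  rw [show Psi act (gd act (gd act f)) s
      = act (s (Fin.last (p+2))) (gd act (gd act f)
          (fun i : Fin (p+2) => s i.castSucc * (s i.succ)⁻¹)) from rfl] at hfin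
  rw [hc, hlast, hone] at hfin
  simpa using hfin

end Homog


section TrLemmas

variable {A : ℤ → Type*} [∀ q, AddCommGroup (A q)] [∀ q, Module ℝ (A q)]

lemma tr_tr {q q' q'' : ℤ} (h : q = q') (h' : q' = q'') (a : A q) :
    tr (A := A) h' (tr h a) = tr (h.trans h') a := by subst h'; subst h; rfl

lemma tr_self {q : ℤ} (h : q = q) (a : A q) : tr (A := A) h a = a := rfl

lemma tr_neg {q q' : ℤ} (h : q = q') (a : A q) : tr (A := A) h (-a) = - tr h a := by
  subst h; rfl

lemma tr_smul {q q' : ℤ} (h : q = q') (r : ℝ) (a : A q) :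
    tr (A := A) h (r • a) = r • tr h a := by subst h; rfl

lemma tr_zero {q q' : ℤ} (h : q = q') : tr (A := A) h (0 : A q) = 0 := by subst h; rfl

lemma tr_cancel {q q' : ℤ} (h : q = q') {a b : A q} (hh : tr (A := A) h a = tr h b) :
    a = b := by subst h; exact hh

lemma tr_d (d : ∀ q : ℤ, A q →ₗ[ℝ] A (q + 1)) {q q' : ℤ} (h : q = q')
    (h' : q + 1 = q' + 1) (a : A q) : d q' (tr h a) = tr h' (d q a) := by
  subst h; rfl

end TrLemmas

section GdLemmas

variable {G : Type*} [Group G]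

lemma gd_comp {A B : Type*} [AddCommGroup A] [Module ℝ A] [AddCommGroup B] [Module ℝ B]
    (actA : G → A →ₗ[ℝ] A) (actB : G → B →ₗ[ℝ] B) (L : A →ₗ[ℝ] B)
    (hL : ∀ g a, L (actA g a) = actB g (L a)) {p : ℕ}
    (f : (Fin p → G) → A) (gs : Fin (p+1) → G) :
    L (gd actA f gs) = gd actB (fun t => L (f t)) gs := by
  simp only [gd, map_add, map_smul, map_sum, hL]

lemma gd_smul {A : Type*} [AddCommGroup A] [Module ℝ A] (act : G → A →ₗ[ℝ] A) (r : ℝ)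
    {p : ℕ} (f : (Fin p → G) → A) (gs : Fin (p+1) → G) :
    gd act (fun t => r • f t) gs = r • gd act f gs := by
  simp only [gd, map_smul, smul_add, Finset.smul_sum, smul_smul, mul_comm r]

lemma gd_neg {A : Type*} [AddCommGroup A] [Module ℝ A] (act : G → A →ₗ[ℝ] A)
    {p : ℕ} (f : (Fin p → G) → A) (gs : Fin (p+1) → G) :
    gd act (fun t => -(f t)) gs = - gd act f gs := by
  have := gd_smul act (-1 : ℝ) f gs
  simp only [neg_one_smul] at this
  exact this

lemma gd_tr {A : ℤ → Type*} [∀ q, AddCommGroup (A q)] [∀ q, Module ℝ (A q)]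
    (act : ∀ q : ℤ, G → A q →ₗ[ℝ] A q) {q q' : ℤ} (h : q = q') {p : ℕ}
    (f : (Fin p → G) → A q) (gs : Fin (p+1) → G) :
    gd (act q') (fun t => tr h (f t)) gs = tr h (gd (act q) f gs) := by
  subst h; rfl

lemma act_tr {A : ℤ → Type*} [∀ q, AddCommGroup (A q)] [∀ q, Module ℝ (A q)]
    (act : ∀ q : ℤ, G → A q →ₗ[ℝ] A q) {q q' : ℤ} (h : q = q') (g : G) (a : A q) :
    act q' g (tr h a) = tr h (act q g a) := by subst h; rfl

end GdLemmas

/-- Let `(A^•, d)` be a cochain complex of real vector spaces with a right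
`G`-action by degree-preserving linear maps commuting with `d`, let `ω ∈ A^m` be
`G`-invariant and exact, let `1 ≤ p ≤ m−1`, and assume the complex is exact in degrees
`m−p, …, m−1`.  Then there are cochains `φᵢ ∈ C^i(G, A^{m−i−1})`, `i = 0, …, p`, with
`ω = −dφ₀` and `δ'φ_{i−1} + δ''φ_i = 0` for `i = 1, …, p` (so
`ω + δ(φ₀ + ⋯ + φ_p) = δ'φ_p`), and every value of `δ'φ_p` is closed. -/
theorem statement1 {G : Type*} [Group G] {A : ℤ → Type*}
    [∀ q, AddCommGroup (A q)] [∀ q, Module ℝ (A q)]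
    (d : ∀ q, A q →ₗ[ℝ] A (q + 1))
    (act : ∀ q, G → A q →ₗ[ℝ] A q)
    (hdd : ∀ (q : ℤ) (a : A q), d (q + 1) (d q a) = 0)
    (hact_one : ∀ q : ℤ, act q 1 = LinearMap.id)
    (hact_mul : ∀ (q : ℤ) (g h : G) (a : A q), act q (g * h) a = act q h (act q g a))
    (hcomm : ∀ (q : ℤ) (g : G) (a : A q), d q (act q g a) = act (q + 1) g (d q a))
    (hlow : ∀ q : ℤ, q < 0 → Subsingleton (A q))
    (m : ℤ) (p : ℕ) (hp : 1 ≤ p) (hpm : (p : ℤ) ≤ m - 1)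
    (ω : A m)
    (hωinv : ∀ g : G, act m g ω = ω)
    (hωexact : ∃ η : A (m - 1), tr (by omega) (d (m - 1) η) = ω)
    (hexact : ∀ q : ℤ, m - p ≤ q → q ≤ m - 1 → ∀ a : A q, d q a = 0 →
        ∃ b : A (q - 1), tr (by omega) (d (q - 1) b) = a) :
    ∃ φ : ∀ i : ℕ, (Fin i → G) → A (m - i - 1),
      -- ω = −dφ₀
      (ω = - tr (by omega) (d (m - (0 : ℕ) - 1) (φ 0 ![])))
      -- δ'φ_{i} + δ''φ_{i+1} = 0 for i+1 = 1, …, p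
      ∧ (∀ i : ℕ, i + 1 ≤ p →
          gd (act (m - i - 1)) (φ i)
            + (fun gs => tr (by omega) (gdd d (φ (i + 1)) gs)) = 0)
      -- every value of δ'φ_p is closed
      ∧ (∀ gs : Fin (p + 1) → G,
          d (m - p - 1) (gd (act (m - p - 1)) (φ p) gs) = 0) := by
  obtain ⟨η, hη⟩ := hωexact
  have gdgd : ∀ (q : ℤ) {k : ℕ} (f : (Fin k → G) → A q) (g : Fin (k+2) → G),
      gd (act q) (gd (act q) f) g = 0 :=
    fun q {k} f g => gd_gd (act q) (hact_one q) (hact_mul q) f g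
  -- base data
  have e0 : m - 1 = m - ((0:ℕ):ℤ) - 1 := by omega
  have e0' : (m - 1) + 1 = (m - ((0:ℕ):ℤ) - 1) + 1 := by omega
  have em : (m - 1) + 1 = m := by omega
  set f0 : (Fin 0 → G) → A (m - ((0:ℕ):ℤ) - 1) := fun _ => tr e0 (-η) with hf0
  have hdf0 : ∀ z : Fin 0 → G, d (m - ((0:ℕ):ℤ) - 1) (f0 z) = tr e0' (-(d (m-1) η)) := by
    intro z
    rw [hf0]
    show d (m - ((0:ℕ):ℤ) - 1) (tr e0 (-η)) = _
    rw [tr_d d e0 e0' (-η), map_neg]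
  have hact_dη : ∀ g : G, act ((m-1)+1) g (d (m-1) η) = d (m-1) η := by
    intro g
    have h1 : act m g (tr em (d (m-1) η)) = tr em (act ((m-1)+1) g (d (m-1) η)) :=
      act_tr act em g _
    have h2 : tr em (d (m-1) η) = ω := hη
    apply tr_cancel em
    rw [← h1, h2, hωinv g]
  -- condition 1, for any cast proof
  have cond1 : ∀ (hpf : (m - ((0:ℕ):ℤ) - 1) + 1 = m),
      ω = - tr hpf (d (m - ((0:ℕ):ℤ) - 1) (f0 ![])) := by
    intro hpf
    rw [hdf0 ![]]
    simp only [tr_neg, neg_neg]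
    rw [tr_tr]
    have : tr (e0'.trans hpf) (d (m-1) η) = ω := hη
    exact this.symm
  -- closedness of δ'φ₀
  have hf0closed : ∀ gs : Fin 1 → G,
      d (m - ((0:ℕ):ℤ) - 1) (gd (act (m - ((0:ℕ):ℤ) - 1)) f0 gs) = 0 := by
    intro gs
    have hexp : gd (act (m - ((0:ℕ):ℤ) - 1)) f0 gs
        = f0 (Fin.tail gs)
          - act (m - ((0:ℕ):ℤ) - 1) (gs (Fin.last 0)) (f0 (Fin.init gs)) := by
      rw [gd]
      simp [sub_eq_add_neg]
    rw [hexp, map_sub, hdf0 (Fin.tail gs),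
        hcomm (m - ((0:ℕ):ℤ) - 1) (gs (Fin.last 0)) (f0 (Fin.init gs)),
        hdf0 (Fin.init gs), act_tr act e0' (gs (Fin.last 0)) (-(d (m-1) η)), map_neg, hact_dη]
    exact sub_self _
  -- step: from closedness build next level with the linking equation
  have L2 : ∀ (i : ℕ), i + 1 ≤ p → ∀ (f : (Fin i → G) → A (m - (i:ℕ) - 1)),
      (∀ gs : Fin (i+1) → G, d (m - (i:ℕ) - 1) (gd (act (m - (i:ℕ) - 1)) f gs) = 0) →
      ∀ (h : (m - ((i+1:ℕ):ℤ) - 1) + 1 = m - (i:ℕ) - 1),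
      ∃ fnext : (Fin (i+1) → G) → A (m - ((i+1:ℕ):ℤ) - 1),
        gd (act (m - (i:ℕ) - 1)) f + (fun gs => tr h (gdd d fnext gs)) = 0 := by
    intro i hi f hf h
    have hq1 : m - (p:ℤ) ≤ m - (i:ℕ) - 1 := by omega
    have hq2 : m - (i:ℕ) - 1 ≤ m - 1 := by omega
    choose b hb using fun gs : Fin (i+1) → G =>
      hexact (m - (i:ℕ) - 1) hq1 hq2 (gd (act (m - (i:ℕ) - 1)) f gs) (hf gs)
    have e2 : m - (i:ℕ) - 1 - 1 = m - ((i+1:ℕ):ℤ) - 1 := by push_cast; ring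
    have e2' : (m - (i:ℕ) - 1 - 1) + 1 = (m - ((i+1:ℕ):ℤ) - 1) + 1 := by rw [e2]
    refine ⟨fun gs => tr e2 (((-1:ℝ) ^ (i:ℕ)) • b gs), ?_⟩
    funext gs
    simp only [Pi.add_apply, Pi.zero_apply]
    have hdd1 : tr h (gdd d (fun gs' => tr e2 (((-1:ℝ) ^ (i:ℕ)) • b gs')) gs)
        = - gd (act (m - (i:ℕ) - 1)) f gs := by
      show tr h (((-1:ℝ) ^ (i+1)) • d (m - ((i+1:ℕ):ℤ) - 1)
          (tr e2 (((-1:ℝ) ^ (i:ℕ)) • b gs))) = _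
      rw [tr_d d e2 e2' _, map_smul]
      simp only [tr_smul]
      rw [tr_tr, smul_smul]
      have hsc : ((-1:ℝ) ^ (i+1)) * ((-1:ℝ) ^ (i:ℕ)) = -1 := by
        rw [← pow_add]
        have h2i : i + 1 + i = 2*i+1 := by omega
        rw [h2i, pow_succ, pow_mul]
        norm_num
      rw [hsc, neg_one_smul]
      have hbgs : tr (e2'.trans h) (d (m - (i:ℕ) - 1 - 1) (b gs))
          = gd (act (m - (i:ℕ) - 1)) f gs := hb gs
      rw [hbgs]
    rw [hdd1, add_neg_cancel]
  -- closedness propagates through the linking equation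
  have L1 : ∀ (i : ℕ) (fprev : (Fin i → G) → A (m - (i:ℕ) - 1))
      (fnext : (Fin (i+1) → G) → A (m - ((i+1:ℕ):ℤ) - 1))
      (h : (m - ((i+1:ℕ):ℤ) - 1) + 1 = m - (i:ℕ) - 1)
      (link : gd (act (m - (i:ℕ) - 1)) fprev + (fun gs => tr h (gdd d fnext gs)) = 0)
      (gs : Fin (i+2) → G),
      d (m - ((i+1:ℕ):ℤ) - 1) (gd (act (m - ((i+1:ℕ):ℤ) - 1)) fnext gs) = 0 := by
    intro i fprev fnext h link gs
    have hd : ∀ t : Fin (i+1) → G, d (m - ((i+1:ℕ):ℤ) - 1) (fnext t)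
        = ((-1:ℝ) ^ (i+1)) • tr h.symm (-(gd (act (m - (i:ℕ) - 1)) fprev t)) := by
      intro t
      have h0 := congrFun link t
      simp only [Pi.add_apply, Pi.zero_apply] at h0
      rw [add_comm, add_eq_zero_iff_eq_neg] at h0
      have h3 := congrArg (tr (A := A) h.symm) h0
      rw [tr_tr, tr_self] at h3
      have h4 : ((-1:ℝ) ^ (i+1)) • gdd d fnext t = d (m - ((i+1:ℕ):ℤ) - 1) (fnext t) := by
        show ((-1:ℝ) ^ (i+1)) • (((-1:ℝ) ^ (i+1)) • d (m - ((i+1:ℕ):ℤ) - 1) (fnext t)) = _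
        rw [smul_smul, ← pow_add, Even.neg_one_pow ⟨i+1, rfl⟩, one_smul]
      rw [← h4, h3]
    have e1 : d (m - ((i+1:ℕ):ℤ) - 1) (gd (act (m - ((i+1:ℕ):ℤ) - 1)) fnext gs)
        = gd (act ((m - ((i+1:ℕ):ℤ) - 1)+1)) (fun t => d (m - ((i+1:ℕ):ℤ) - 1) (fnext t)) gs :=
      gd_comp _ _ (d (m - ((i+1:ℕ):ℤ) - 1)) (hcomm (m - ((i+1:ℕ):ℤ) - 1)) fnext gs
    have e2 : (fun t => d (m - ((i+1:ℕ):ℤ) - 1) (fnext t))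
        = (fun t => ((-1:ℝ) ^ (i+1))
            • tr h.symm (-(gd (act (m - (i:ℕ) - 1)) fprev t))) := funext hd
    have e3 : gd (act ((m - ((i+1:ℕ):ℤ) - 1)+1))
          (fun t => ((-1:ℝ) ^ (i+1)) • tr h.symm (-(gd (act (m - (i:ℕ) - 1)) fprev t))) gs
        = ((-1:ℝ) ^ (i+1)) • gd (act ((m - ((i+1:ℕ):ℤ) - 1)+1))
            (fun t => tr h.symm (-(gd (act (m - (i:ℕ) - 1)) fprev t))) gs :=
      gd_smul _ _ _ _
    have e4 : gd (act ((m - ((i+1:ℕ):ℤ) - 1)+1))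
          (fun t => tr h.symm (-(gd (act (m - (i:ℕ) - 1)) fprev t))) gs
        = tr h.symm (gd (act (m - (i:ℕ) - 1))
            (fun t => -(gd (act (m - (i:ℕ) - 1)) fprev t)) gs) :=
      gd_tr act h.symm _ gs
    have e5 : gd (act (m - (i:ℕ) - 1)) (fun t => -(gd (act (m - (i:ℕ) - 1)) fprev t)) gs
        = -(gd (act (m - (i:ℕ) - 1)) (gd (act (m - (i:ℕ) - 1)) fprev) gs) := gd_neg _ _ _
    rw [e1, e2, e3, e4, e5, gdgd (m - (i:ℕ) - 1) fprev gs, neg_zero, tr_zero, smul_zero]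
  -- main induction
  suffices H : ∀ p' : ℕ, 1 ≤ p' → p' ≤ p →
      ∃ φ : ∀ i : ℕ, (Fin i → G) → A (m - i - 1),
        (ω = - tr (by omega) (d (m - (0 : ℕ) - 1) (φ 0 ![])))
        ∧ (∀ i : ℕ, i + 1 ≤ p' →
            gd (act (m - i - 1)) (φ i)
              + (fun gs => tr (by omega) (gdd d (φ (i + 1)) gs)) = 0)
        ∧ (∀ gs : Fin (p' + 1) → G,
            d (m - p' - 1) (gd (act (m - p' - 1)) (φ p') gs) = 0) by
    exact H p hp le_rfl
  intro p' hp1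
  induction p', hp1 using Nat.le_induction with
  | base =>
    intro hpp
    obtain ⟨f1, link1⟩ := L2 0 (by omega) f0 hf0closed (by omega)
    refine ⟨fun i => match i with
      | 0 => f0
      | 1 => f1
      | (_+2) => fun _ => (0 : A _), cond1 _, ?_, ?_⟩
    · intro i hi
      have hi0 : i = 0 := by omega
      subst hi0
      exact link1
    · intro gs
      exact L1 0 f0 f1 (by omega) link1 gs
  | succ n hn ih =>
    intro hpp
    obtain ⟨φ, c1, c2, c3⟩ := ih (by omega)
    obtain ⟨fn, linkn⟩ := L2 n (by omega) (φ n) c3 (by omega)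
    refine ⟨Function.update φ (n+1) fn, ?_, ?_, ?_⟩
    · rw [Function.update_of_ne (by omega)]
      exact c1
    · intro i hi
      by_cases hin : i + 1 ≤ n
      · rw [Function.update_of_ne (show i ≠ n + 1 by omega),
            Function.update_of_ne (show i + 1 ≠ n + 1 by omega)]
        exact c2 i hin
      · have : i = n := by omega
        subst this
        rw [Function.update_of_ne (show i ≠ i + 1 by omega), Function.update_self]
        exact linkn
    · intro gs
      rw [Function.update_self]
      exact L1 n (φ n) fn (by omega) linkn gs
end

section
/- Let w be a nonzero alternating m-form on ℝⁿ (1 ≤ m ≤ n), and let ω be the constant m-form ω(x) ≡ w on ℝⁿ. Let the group G = (ℝⁿ, +) act on forms by pullback along translations. For j = 0, …, m−1 define φ_j ∈ C^j(G, Ω^{m−j−1}(ℝⁿ)) by φ_j(a_1,…,a_j)(x)(v_1,…,v_{m−j−1}) = [(−1)^{j−1} / (m(m−1)⋯(m−j))] · w(a_1,…,a_j, x, v_1,…,v_{m−j−1}), for a_1,…,a_j, x, v_1,…,v_{m−j−1} ∈ ℝⁿ. Then ω = −dφ_0, and δ'φ_{j−1} + δ''φ_j = 0 for j = 1,…,m−1.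 -/
open scoped BigOperators

noncomputable section

/-- A (raw) differential `q`-form on `ℝⁿ`: a map assigning to every point of `ℝⁿ` a
function of `q` vectors (alternating `q`-linear, in the case of an actual form). -/
abbrev Form (n q : ℕ) :=
  EuclideanSpace ℝ (Fin n) → (Fin q → EuclideanSpace ℝ (Fin n)) → ℝ

/-- The exterior derivative,
`(dη)(x)(v₀,…,v_q) = ∑ᵢ (−1)^i (Dη(x)vᵢ)(v₀,…,v̂ᵢ,…,v_q)`,
where `D` is the Fréchet derivative. -/
def extD {n q : ℕ} (η : Form n q) : Form n (q + 1) :=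
  fun x v => ∑ i : Fin (q + 1),
    (-1 : ℝ) ^ (i : ℕ) * fderiv ℝ (fun y => η y (v ∘ i.succAbove)) x (v i)

/-- Merge the `i`-th and `(i+1)`-st entries of a tuple of elements of an additive group:
the tuple `(g₁, …, g_i + g_{i+1}, …, g_{p+1})` (0-indexed). -/
def addIns {G : Type*} [Add G] {p : ℕ} (g : Fin (p + 1) → G) (i : Fin p) : Fin p → G :=
  fun j =>
    if (j : ℕ) < (i : ℕ) then g j.castSucc
    else if (j : ℕ) = (i : ℕ) then g j.castSucc + g j.succ
    else g j.succ

/-- `δ'` : the nonhomogeneous group-cochain differential, for a right action `act` of an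
additive group `G`:
`(Df)(g₁,…,g_{p+1}) = f(g₂,…,g_{p+1}) + ∑ (-1)^i f(g₁,…,g_i + g_{i+1},…,g_{p+1})
  + (-1)^{p+1} (f(g₁,…,g_p))·g_{p+1}`. -/
def gdA {G : Type*} [Add G] {A : Type*} [AddCommGroup A] [Module ℝ A]
    (act : G → A → A) {p : ℕ} (f : (Fin p → G) → A) : (Fin (p + 1) → G) → A :=
  fun g =>
    f (Fin.tail g)
      + ∑ i : Fin p, ((-1 : ℝ) ^ ((i : ℕ) + 1)) • f (addIns g i)
      + ((-1 : ℝ) ^ (p + 1)) • act (g (Fin.last p)) (f (Fin.init g))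

/-- Pullback of a `q`-form along the translation `x ↦ x + a`: `(η·a)(x) = η(x + a)`. -/
def pbT {n q : ℕ} (a : EuclideanSpace ℝ (Fin n)) (η : Form n q) : Form n q :=
  fun x v => η (x + a) v

/-- The tuple `(a₁, …, a_j, x, v₁, …, v_{m−j−1})` of length `m`. -/
def concatJ {m j : ℕ} {α : Type*} (a : Fin j → α) (x : α) (v : Fin (m - j - 1) → α) :
    Fin m → α :=
  fun k =>
    if h : (k : ℕ) < j then a ⟨k, h⟩
    else if h' : (k : ℕ) = j then x
    else v ⟨(k : ℕ) - j - 1, by have := k.isLt; omega⟩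

/-- The cochains of the example:
`φ_j(a₁,…,a_j)(x)(v₁,…,v_{m−j−1}) =
  [(−1)^{j−1}/(m(m−1)⋯(m−j))] · w(a₁,…,a_j, x, v₁,…,v_{m−j−1})`. -/
def phiEx (n m : ℕ) (w : AlternatingMap ℝ (EuclideanSpace ℝ (Fin n)) ℝ (Fin m)) (j : ℕ) :
    (Fin j → EuclideanSpace ℝ (Fin n)) → Form n (m - j - 1) :=
  fun a x v =>
    ((-1 : ℝ) ^ (j + 1) / ∏ t ∈ Finset.range (j + 1), ((m - t : ℕ) : ℝ)) *
      w (concatJ a x v)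

/-! ### Helpers -/

/-- concatenation of a `p`-tuple and a `q`-tuple into an `m`-tuple, `p + q = m`. -/
def myCat {α : Type*} {m p q : ℕ} (h : p + q = m) (a : Fin p → α) (v : Fin q → α) :
    Fin m → α :=
  fun k => if hk : (k : ℕ) < p then a ⟨k, hk⟩ else v ⟨(k : ℕ) - p, by have := k.isLt; omega⟩

/-- extension of a permutation of the last `q` coordinates by the identity. -/
def extPerm {m p q : ℕ} (h : p + q = m) (σ : Equiv.Perm (Fin q)) : Equiv.Perm (Fin m) :=
  Equiv.permCongr (finSumFinEquiv.trans (finCongr h)) (Equiv.sumCongr (Equiv.refl (Fin p)) σ)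

lemma sign_extPerm {m p q : ℕ} (h : p + q = m) (σ : Equiv.Perm (Fin q)) :
    Equiv.Perm.sign (extPerm h σ) = Equiv.Perm.sign σ := by
  rw [extPerm, Equiv.Perm.sign_permCongr, Equiv.Perm.sign_sumCongr]
  simp

lemma myCat_comp_extPerm {α : Type*} {m p q : ℕ} (h : p + q = m) (a : Fin p → α)
    (v : Fin q → α) (σ : Equiv.Perm (Fin q)) :
    (myCat h a v) ∘ (extPerm h σ) = myCat h a (v ∘ σ) := by
  funext k
  simp only [Function.comp_apply, extPerm, Equiv.permCongr_apply, Equiv.trans_apply,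
    Equiv.symm_trans_apply, finCongr_symm, finCongr_apply]
  by_cases hk : (k : ℕ) < p
  · have h1 : Fin.cast h.symm k = Fin.castAdd q ⟨k, hk⟩ := by ext; simp
    rw [h1, finSumFinEquiv_symm_apply_castAdd, Equiv.sumCongr_apply, Sum.map_inl,
      Equiv.refl_apply, finSumFinEquiv_apply_left]
    simp [myCat, hk]
  · have h1 : Fin.cast h.symm k = Fin.natAdd p ⟨(k : ℕ) - p, by have := k.isLt; omega⟩ := by
      ext; simp; omega
    rw [h1, finSumFinEquiv_symm_apply_natAdd, Equiv.sumCongr_apply, Sum.map_inr,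
      finSumFinEquiv_apply_right]
    simp only [myCat, Fin.coe_cast, Fin.coe_natAdd]
    rw [dif_neg (by omega), dif_neg hk]
    congr 1
    ext
    simp


lemma map_perm_myCat {n m p q : ℕ} (w : AlternatingMap ℝ (EuclideanSpace ℝ (Fin n)) ℝ (Fin m))
    (h : p + q = m) (a : Fin p → EuclideanSpace ℝ (Fin n))
    (v : Fin q → EuclideanSpace ℝ (Fin n)) (σ : Equiv.Perm (Fin q)) :
    w (myCat h a (v ∘ σ)) = ((Equiv.Perm.sign σ : ℤ) : ℝ) * w (myCat h a v) := by
  rw [← myCat_comp_extPerm h a v σ, w.map_perm, sign_extPerm]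
  simp [Units.smul_def, zsmul_eq_mul]

lemma concatJ_eq_myCat {α : Type*} {m j : ℕ} (hj : j < m) (a : Fin j → α) (x : α)
    (v : Fin (m - j - 1) → α) :
    concatJ a x v = myCat (by omega : j + (m - j - 1 + 1) = m) a (Fin.cons x v) := by
  funext k
  simp only [concatJ, myCat]
  by_cases h1 : (k : ℕ) < j
  · rw [dif_pos h1, dif_pos h1]
  · rw [dif_neg h1, dif_neg h1]
    by_cases h2 : (k : ℕ) = j
    · rw [dif_pos h2]
      have : (⟨(k : ℕ) - j, by have := k.isLt; omega⟩ : Fin (m - j - 1 + 1)) = 0 := by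
        ext; simp; omega
      rw [this, Fin.cons_zero]
    · rw [dif_neg h2]
      have : (⟨(k : ℕ) - j, by have := k.isLt; omega⟩ : Fin (m - j - 1 + 1)) =
          Fin.succ ⟨(k : ℕ) - j - 1, by have := k.isLt; omega⟩ := by
        ext; simp; omega
      rw [this, Fin.cons_succ]

lemma cons_eq_comp_cycleRange {α : Type*} {q : ℕ} (u : Fin (q + 1) → α) (i : Fin (q + 1)) :
    Fin.cons (u i) (u ∘ i.succAbove) = u ∘ ⇑(Fin.cycleRange i).symm := by
  funext k
  cases k using Fin.cases with
  | zero => simp [Fin.cycleRange_symm_zero]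
  | succ k => simp [Fin.cycleRange_symm_succ]

/-- Key alternation lemma. -/
lemma keyA {n m p : ℕ} (w : AlternatingMap ℝ (EuclideanSpace ℝ (Fin n)) ℝ (Fin m))
    (hp : p + 1 ≤ m) (a : Fin p → EuclideanSpace ℝ (Fin n))
    (u : Fin (m - p - 1 + 1) → EuclideanSpace ℝ (Fin n)) (i : Fin (m - p - 1 + 1)) :
    w (concatJ a (u i) (u ∘ i.succAbove))
      = (-1 : ℝ) ^ (i : ℕ) * w (concatJ a (u 0) (Fin.tail u)) := by
  have hp' : p < m := hp
  rw [concatJ_eq_myCat hp', concatJ_eq_myCat hp', cons_eq_comp_cycleRange,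
    Fin.cons_self_tail, map_perm_myCat]
  congr 2
  rw [Equiv.Perm.sign_symm, Fin.sign_cycleRange]
  push_cast
  norm_num

lemma fderiv_cmul_alt {n m : ℕ} (w : AlternatingMap ℝ (EuclideanSpace ℝ (Fin n)) ℝ (Fin m))
    (c : ℝ) (u : Fin m → EuclideanSpace ℝ (Fin n)) (idx : Fin m)
    (x z : EuclideanSpace ℝ (Fin n)) :
    fderiv ℝ (fun y => c * w (Function.update u idx y)) x z
      = c * w (Function.update u idx z) := by
  set L := LinearMap.toContinuousLinearMap (w.toMultilinearMap.toLinearMap u idx) with hL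
  have hfun : (fun y : EuclideanSpace ℝ (Fin n) => c * w (Function.update u idx y))
      = fun y => c * L y := by
    funext y; simp [hL]
  have hd : HasFDerivAt (fun y => c * L y) (c • L) x := (L.hasFDerivAt).const_mul c
  rw [hfun, hd.fderiv]
  simp [hL]

/-- `concatJ` as an update of the middle slot. -/
lemma concatJ_update_mid {α : Type*} {m j : ℕ} (hj : j < m) (a : Fin j → α)
    (x y : α) (v : Fin (m - j - 1) → α) :
    concatJ a y v = Function.update (concatJ a x v) ⟨j, hj⟩ y := by
  funext k
  rcases eq_or_ne k ⟨j, hj⟩ with hk | hk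
  · subst hk
    simp [concatJ, Function.update]
  · rw [Function.update_of_ne hk]
    have hk' : (k : ℕ) ≠ j := fun h => hk (Fin.ext h)
    simp only [concatJ, dif_neg hk']

/-- `concatJ` as an update of one of the first `j` slots. -/
lemma concatJ_update_left {α : Type*} {m j : ℕ} (hj : j < m)
    (b : Fin j → α) (i : Fin j) (y x : α) (v : Fin (m - j - 1) → α) :
    concatJ (Function.update b i y) x v
      = Function.update (concatJ b x v) ⟨(i : ℕ), lt_trans i.isLt hj⟩ y := by
  funext k
  rcases eq_or_ne k ⟨(i : ℕ), lt_trans i.isLt hj⟩ with hk | hk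
  · subst hk
    simp only [concatJ, dif_pos i.isLt, Function.update_self]
  · rw [Function.update_of_ne hk]
    have hk' : (k : ℕ) ≠ (i : ℕ) := fun h => hk (Fin.ext h)
    simp only [concatJ]
    by_cases h1 : (k : ℕ) < j
    · rw [dif_pos h1, dif_pos h1, Function.update_of_ne (by
        intro h; exact hk' (congrArg Fin.val h))]
    · rw [dif_neg h1, dif_neg h1]

lemma telescope (T : ℕ → ℝ) (j : ℕ) :
    ∑ i ∈ Finset.range j, (-1 : ℝ) ^ (i + 1) * (T i + T (i + 1))
      = -T 0 + (-1 : ℝ) ^ j * T j := by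
  induction j with
  | zero => simp
  | succ j ih =>
    rw [Finset.sum_range_succ, ih, pow_succ]
    ring

lemma dlem {n m : ℕ} (w : AlternatingMap ℝ (EuclideanSpace ℝ (Fin n)) ℝ (Fin m))
    (j : ℕ) (hj : j + 1 ≤ m) (a : Fin j → EuclideanSpace ℝ (Fin n))
    (x : EuclideanSpace ℝ (Fin n)) (u : Fin (m - j - 1 + 1) → EuclideanSpace ℝ (Fin n)) :
    extD (phiEx n m w j a) x u
      = ((-1 : ℝ) ^ (j + 1) / ∏ t ∈ Finset.range (j + 1), ((m - t : ℕ) : ℝ))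
          * (((m - j : ℕ) : ℝ) * w (concatJ a (u 0) (Fin.tail u))) := by
  have hj' : j < m := hj
  set c := ((-1 : ℝ) ^ (j + 1) / ∏ t ∈ Finset.range (j + 1), ((m - t : ℕ) : ℝ)) with hc
  set W := w (concatJ a (u 0) (Fin.tail u)) with hW
  have step : ∀ i : Fin (m - j - 1 + 1),
      fderiv ℝ (fun y => phiEx n m w j a y (u ∘ i.succAbove)) x (u i)
        = c * ((-1 : ℝ) ^ (i : ℕ) * W) := by
    intro i
    have h1 : (fun y => phiEx n m w j a y (u ∘ i.succAbove))
        = fun y => c * w (Function.update (concatJ a x (u ∘ i.succAbove)) ⟨j, hj'⟩ y) := by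
      funext y
      simp only [phiEx, ← hc]
      rw [concatJ_update_mid hj' a x y]
    rw [h1, fderiv_cmul_alt, ← concatJ_update_mid hj' a x (u i), keyA w hj, hW]
  simp only [extD]
  calc ∑ i : Fin (m - j - 1 + 1), (-1 : ℝ) ^ (i : ℕ) *
        fderiv ℝ (fun y => phiEx n m w j a y (u ∘ i.succAbove)) x (u i)
      = ∑ _i : Fin (m - j - 1 + 1), c * W := by
        refine Finset.sum_congr rfl fun i _ => ?_
        rw [step i]
        have hsq : (-1 : ℝ) ^ (i : ℕ) * (-1 : ℝ) ^ (i : ℕ) = 1 := by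
          rw [← pow_add]
          exact Even.neg_one_pow ⟨(i : ℕ), rfl⟩
        calc (-1 : ℝ) ^ (i : ℕ) * (c * ((-1 : ℝ) ^ (i : ℕ) * W))
            = ((-1 : ℝ) ^ (i : ℕ) * (-1 : ℝ) ^ (i : ℕ)) * (c * W) := by ring
          _ = c * W := by rw [hsq, one_mul]
    _ = ((m - j - 1 + 1 : ℕ) : ℝ) * (c * W) := by
        rw [Finset.sum_const, Finset.card_univ, Fintype.card_fin, nsmul_eq_mul]
    _ = c * (((m - j : ℕ) : ℝ) * W) := by
        have : m - j - 1 + 1 = m - j := by omega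
        rw [this]; ring

lemma succAbove_val {p : ℕ} (i : Fin (p + 1)) (k : Fin p) :
    ((i.succAbove k : Fin (p + 1)) : ℕ) = if (k : ℕ) < (i : ℕ) then (k : ℕ) else (k : ℕ) + 1 := by
  by_cases h : Fin.castSucc k < i
  · rw [Fin.succAbove_of_castSucc_lt _ _ h]
    have h' : (k : ℕ) < (i : ℕ) := by simpa [Fin.lt_def] using h
    simp [h']
  · rw [Fin.succAbove_of_le_castSucc _ _ (Fin.not_lt.1 h)]
    have h' : ¬ (k : ℕ) < (i : ℕ) := by simpa [Fin.lt_def] using h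
    simp [h']

lemma delSucc {α : Type*} {p : ℕ} (a : Fin (p + 1) → α) (i : Fin p) :
    (a ∘ (Fin.succ i).succAbove)
      = Function.update (a ∘ (Fin.castSucc i).succAbove) i (a i.castSucc) := by
  funext k
  rcases eq_or_ne k i with hk | hk
  · subst hk
    rw [Function.update_self, Function.comp_apply]
    congr 1
    ext
    rw [succAbove_val]
    simp [Fin.lt_def]
  · rw [Function.update_of_ne hk, Function.comp_apply, Function.comp_apply]
    have hk' : (k : ℕ) ≠ (i : ℕ) := fun h => hk (Fin.ext h)
    congr 1
    ext
    rw [succAbove_val, succAbove_val]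
    simp only [Fin.val_succ, Fin.coe_castSucc]
    split_ifs <;> omega

lemma selfSucc {α : Type*} {p : ℕ} (a : Fin (p + 1) → α) (i : Fin p) :
    (a ∘ (Fin.castSucc i).succAbove) i = a i.succ := by
  rw [Function.comp_apply]
  congr 1
  ext
  rw [succAbove_val]
  simp [Fin.lt_def]

lemma addIns_eq {G : Type*} [Add G] {p : ℕ} (g : Fin (p + 1) → G) (i : Fin p) :
    addIns g i
      = Function.update (g ∘ (Fin.castSucc i).succAbove) i (g i.castSucc + g i.succ) := by
  funext k
  rcases eq_or_ne k i with hk | hk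
  · subst hk
    simp [addIns]
  · rw [Function.update_of_ne hk, Function.comp_apply]
    have hk' : (k : ℕ) ≠ (i : ℕ) := fun h => hk (Fin.ext h)
    simp only [addIns, if_neg hk']
    by_cases h1 : (k : ℕ) < (i : ℕ)
    · rw [if_pos h1]
      congr 1
      ext
      rw [succAbove_val]
      simp only [Fin.coe_castSucc]
      rw [if_pos h1]
    · rw [if_neg h1]
      congr 1
      ext
      rw [succAbove_val]
      simp only [Fin.coe_castSucc, Fin.val_succ]
      rw [if_neg h1]

lemma concatJ_mid {α : Type*} {m j : ℕ} (hj : j < m) (a : Fin j → α) (x : α)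
    (v : Fin (m - j - 1) → α) : concatJ a x v ⟨j, hj⟩ = x := by
  simp [concatJ]

lemma glem {n m : ℕ} (w : AlternatingMap ℝ (EuclideanSpace ℝ (Fin n)) ℝ (Fin m))
    (j : ℕ) (hj : j + 1 ≤ m) (a : Fin (j + 1) → EuclideanSpace ℝ (Fin n))
    (x : EuclideanSpace ℝ (Fin n)) (v : Fin (m - j - 1) → EuclideanSpace ℝ (Fin n)) :
    gdA pbT (phiEx n m w j) a x v
      = (-1 : ℝ) ^ (j + 1) *
          (((-1 : ℝ) ^ (j + 1) / ∏ t ∈ Finset.range (j + 1), ((m - t : ℕ) : ℝ)) *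
            w (concatJ (Fin.init a) (a (Fin.last j)) v)) := by
  have hj' : j < m := hj
  set c := ((-1 : ℝ) ^ (j + 1) / ∏ t ∈ Finset.range (j + 1), ((m - t : ℕ) : ℝ)) with hc
  set D : Fin (j + 1) → ℝ := fun k => w (concatJ (a ∘ k.succAbove) x v) with hD
  set W := w (concatJ (Fin.init a) (a (Fin.last j)) v) with hW
  have htail : Fin.tail a = a ∘ (0 : Fin (j + 1)).succAbove := rfl
  have hinit : Fin.init a = a ∘ (Fin.last j).succAbove := by
    funext k; simp [Fin.init, Fin.succAbove_last]
  have hsplit : ∀ i : Fin j, w (concatJ (addIns a i) x v) = D i.succ + D i.castSucc := by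
    intro i
    rw [addIns_eq, concatJ_update_left hj', AlternatingMap.map_update_add,
      ← concatJ_update_left hj', ← concatJ_update_left hj', ← delSucc]
    have h2 : Function.update (a ∘ (Fin.castSucc i).succAbove) i (a i.succ)
        = a ∘ (Fin.castSucc i).succAbove := by
      rw [← selfSucc a i, Function.update_eq_self]
    rw [h2, hD]
  have hlast : w (concatJ (Fin.init a) (x + a (Fin.last j)) v) = D (Fin.last j) + W := by
    rw [concatJ_update_mid hj' (Fin.init a) x (x + a (Fin.last j)) v,
      AlternatingMap.map_update_add]
    congr 1
    · rw [← concatJ_update_mid hj' (Fin.init a) x x v, hinit]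
    · rw [← concatJ_update_mid hj' (Fin.init a) x (a (Fin.last j)) v, hW]
  set T : ℕ → ℝ := fun t => D ⟨min t j, by omega⟩ with hT
  have hT0 : T 0 = D 0 := by
    simp only [hT]
    congr 1
  have hTj : T j = D (Fin.last j) := by
    simp only [hT]
    congr 1
    ext
    simp [Fin.last]
  have hsum : ∑ i : Fin j, ((-1 : ℝ) ^ ((i : ℕ) + 1)) * (c * w (concatJ (addIns a i) x v))
      = c * (-T 0 + (-1 : ℝ) ^ j * T j) := by
    rw [← telescope T j, Finset.mul_sum,
      ← Fin.sum_univ_eq_sum_range (fun t => c * ((-1 : ℝ) ^ (t + 1) * (T t + T (t + 1)))) j]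
    refine Finset.sum_congr rfl fun i _ => ?_
    rw [hsplit i]
    have hTi : T (i : ℕ) = D i.castSucc := by
      simp only [hT]
      congr 1
      ext
      simp [Nat.min_eq_left (le_of_lt i.isLt)]
    have hTi1 : T ((i : ℕ) + 1) = D i.succ := by
      simp only [hT]
      congr 1
      ext
      simp [Nat.min_eq_left (Nat.succ_le_of_lt i.isLt)]
    rw [hTi, hTi1]
    ring
  simp only [gdA, Pi.add_apply, Finset.sum_apply, Pi.smul_apply, smul_eq_mul, pbT]
  simp only [phiEx, ← hc]
  rw [hsum, htail, hlast]
  have hD0 : w (concatJ (a ∘ (0 : Fin (j + 1)).succAbove) x v) = D 0 := rfl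
  rw [hD0, hT0, hTj, pow_succ]
  ring

/-- Let `w` be a nonzero alternating `m`-form on `ℝⁿ` (`1 ≤ m ≤ n`), let
`ω(x) ≡ w` be the corresponding constant (translation-invariant) `m`-form, and let the
group `G = (ℝⁿ, +)` act on forms by pullback along translations.  Then the cochains
`φ_j ∈ C^j(G, Ω^{m−j−1}(ℝⁿ))` defined above satisfy `ω = −dφ₀` and
`δ'φ_{j−1} + δ''φ_j = 0` for `j = 1, …, m−1`. -/
theorem statement8 (n m : ℕ) (hm : 1 ≤ m) (hmn : m ≤ n)
    (w : AlternatingMap ℝ (EuclideanSpace ℝ (Fin n)) ℝ (Fin m)) (hw : w ≠ 0) :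
    -- ω = −dφ₀
    (∀ (x : EuclideanSpace ℝ (Fin n)) (v : Fin m → EuclideanSpace ℝ (Fin n)),
        w v = - extD (phiEx n m w 0 ![]) x (fun k => v (Fin.cast (by omega) k)))
    -- δ'φ_j + δ''φ_{j+1} = 0 for j+1 = 1, …, m−1, where δ''φ_{j+1} = (−1)^{j+1} d φ_{j+1}
    ∧ (∀ (j : ℕ) (hj : j + 1 ≤ m - 1),
        ∀ (a : Fin (j + 1) → EuclideanSpace ℝ (Fin n)) (x : EuclideanSpace ℝ (Fin n))
          (v : Fin (m - j - 1) → EuclideanSpace ℝ (Fin n)),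
        gdA pbT (phiEx n m w j) a x v
          + ((-1 : ℝ) ^ (j + 1)) *
              extD (phiEx n m w (j + 1) a) x (fun k => v (Fin.cast (by omega) k)) = 0) := by
  constructor
  · intro x v
    rw [dlem w 0 (by omega) ![] x (fun k => v (Fin.cast (by omega) k))]
    have harg : concatJ (![] : Fin 0 → EuclideanSpace ℝ (Fin n))
        ((fun k : Fin (m - 0 - 1 + 1) => v (Fin.cast (by omega) k)) 0)
        (Fin.tail (fun k : Fin (m - 0 - 1 + 1) => v (Fin.cast (by omega) k))) = v := by
      funext k
      simp only [concatJ, Fin.tail]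
      rw [dif_neg (by omega : ¬ (k : ℕ) < 0)]
      by_cases h2 : (k : ℕ) = 0
      · rw [dif_pos h2]
        exact congrArg v (Fin.ext (by simp [h2]))
      · rw [dif_neg h2]
        exact congrArg v (Fin.ext (by simp only [Fin.coe_cast, Fin.val_succ]; omega))
    rw [harg]
    have hmne : (m : ℝ) ≠ 0 := Nat.cast_ne_zero.2 (by omega)
    simp only [zero_add, Finset.prod_range_one, Nat.sub_zero, pow_one]
    field_simp
  · intro j hj a x v
    have hj2 : j + 2 ≤ m := by omega
    rw [glem w j (by omega) a x v,
      dlem w (j + 1) (by omega) a x (fun k => v (Fin.cast (by omega) k))]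
    have harg : concatJ a
        ((fun k : Fin (m - (j + 1) - 1 + 1) => v (Fin.cast (by omega) k)) 0)
        (Fin.tail (fun k : Fin (m - (j + 1) - 1 + 1) => v (Fin.cast (by omega) k)))
        = concatJ (Fin.init a) (a (Fin.last j)) v := by
      funext k
      simp only [concatJ, Fin.tail, Fin.init]
      by_cases h1 : (k : ℕ) < j
      · rw [dif_pos (by omega : (k : ℕ) < j + 1), dif_pos h1]
        exact congrArg a (Fin.ext (by simp))
      · rw [dif_neg h1]
        by_cases h2 : (k : ℕ) = j
        · rw [dif_pos (by omega : (k : ℕ) < j + 1), dif_pos h2]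
          exact congrArg a (Fin.ext (by simp [Fin.last, h2]))
        · rw [dif_neg (by omega : ¬ (k : ℕ) < j + 1), dif_neg h2]
          by_cases h3 : (k : ℕ) = j + 1
          · rw [dif_pos h3]
            exact congrArg v (Fin.ext (by simp only [Fin.coe_cast, Fin.val_zero]; omega))
          · rw [dif_neg h3]
            exact congrArg v (Fin.ext (by simp only [Fin.coe_cast, Fin.val_succ]; omega))
    rw [harg]
    set P := ∏ t ∈ Finset.range (j + 1), ((m - t : ℕ) : ℝ) with hPdef
    have hP : P ≠ 0 := by
      rw [hPdef]
      refine Finset.prod_ne_zero_iff.2 fun t ht => ?_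
      have : t < j + 1 := Finset.mem_range.1 ht
      exact Nat.cast_ne_zero.2 (by omega)
    set Q := ((m - (j + 1) : ℕ) : ℝ) with hQdef
    have hQ : Q ≠ 0 := Nat.cast_ne_zero.2 (by omega)
    have hprod : ∏ t ∈ Finset.range (j + 1 + 1), ((m - t : ℕ) : ℝ) = P * Q :=
      Finset.prod_range_succ _ _
    rw [hprod]
    have h1 : (-1 : ℝ) ^ (j + 1 + 1) = -(-1 : ℝ) ^ (j + 1) := by rw [pow_succ]; ring
    rw [h1]
    field_simp
    ring
end
end

section
/- Let w be an alternating m-form on ℝⁿ (1 ≤ m ≤ n), and let the group G = (ℝⁿ, +) act on forms on ℝⁿ by pullback along translations. Let φ_{m−1} ∈ C^{m−1}(G, Ω^0(ℝⁿ)) be given by φ_{m−1}(a_1,…,a_{m−1})(x) = [(−1)^{m−2}/m!] · w(a_1,…,a_{m−1}, x). Then for all a_1,…,a_m ∈ ℝⁿ, the function δ'φ_{m−1}(a_1,…,a_m) : ℝⁿ → ℝ is the constant function with value (1/m!) · w(a_1,…,a_m). -/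
open scoped BigOperators

noncomputable section

/-- Pullback of a `0`-form (a function `ℝⁿ → ℝ`) along the translation `x ↦ x + a`:
`(f·a)(x) = f(x + a)`. -/
def pbT0 {n : ℕ} (a : EuclideanSpace ℝ (Fin n)) (f : EuclideanSpace ℝ (Fin n) → ℝ) :
    EuclideanSpace ℝ (Fin n) → ℝ :=
  fun x => f (x + a)

section MyAux

/-- telescoping sum -/
lemma telescope_aux (m : ℕ) (F : Fin (m + 1) → ℝ) :
    ∑ i : Fin m, (-1 : ℝ) ^ ((i : ℕ) + 1) * (F i.succ + F i.castSucc)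
      = (-1 : ℝ) ^ m * F (Fin.last m) - F 0 := by
  induction m with
  | zero => simp [Fin.last]
  | succ m ih =>
    rw [Fin.sum_univ_castSucc]
    have h1 : ∀ i : Fin m,
        (-1 : ℝ) ^ (((i.castSucc : Fin (m+1)) : ℕ) + 1) *
          (F (i.castSucc).succ + F i.castSucc.castSucc)
        = (-1 : ℝ) ^ ((i : ℕ) + 1) *
          ((F ∘ Fin.castSucc) i.succ + (F ∘ Fin.castSucc) i.castSucc) := by
      intro i
      rfl
    rw [Finset.sum_congr rfl (fun i _ => h1 i), ih (F ∘ Fin.castSucc)]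
    have h2 : ((F ∘ Fin.castSucc) 0 : ℝ) = F 0 := by simp
    have h3 : (Fin.last m).succ = Fin.last (m + 1) := rfl
    simp only [Function.comp_apply, h2, h3, Fin.coe_castSucc, Fin.val_last, Fin.castSucc_zero]
    ring

private theorem splitAddIns (n m : ℕ)
    (w : AlternatingMap ℝ (EuclideanSpace ℝ (Fin n)) ℝ (Fin (m + 1)))
    (a : Fin (m + 1) → EuclideanSpace ℝ (Fin n)) (x : EuclideanSpace ℝ (Fin n))
    (i : Fin m) :
    w (Fin.snoc (addIns a i) x)
      = w (Fin.snoc (a ∘ (i.succ).succAbove) x)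
        + w (Fin.snoc (a ∘ (i.castSucc).succAbove) x) := by
  set v : Fin (m + 1) → EuclideanSpace ℝ (Fin n) :=
    Fin.snoc (a ∘ (i.castSucc).succAbove) x with hv
  have key : ∀ z, Fin.snoc (Function.update (a ∘ (i.castSucc).succAbove) i z) x
      = Function.update v i.castSucc z := by
    intro z
    funext j
    refine Fin.lastCases ?_ (fun jj => ?_) j
    · rw [Fin.snoc_last]
      rw [Function.update_of_ne (by simp [Fin.ext_iff]; omega)]
      simp [hv]
    · rw [Fin.snoc_castSucc]
      rcases eq_or_ne jj i with rfl | hne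
      · simp [hv]
      · rw [Function.update_of_ne hne, Function.update_of_ne (by simpa [Fin.castSucc_inj] using hne)]
        simp [hv]
  have e1' : addIns a i = Function.update (a ∘ (i.castSucc).succAbove) i
      (a i.castSucc + a i.succ) := by
    funext j
    rcases eq_or_ne j i with rfl | hne
    · simp [addIns]
    · rw [Function.update_of_ne hne]
      have hne' : (j : ℕ) ≠ (i : ℕ) := Fin.val_ne_of_ne hne
      simp only [addIns, Function.comp_apply, Fin.succAbove, Fin.lt_def,
        Fin.coe_castSucc]
      split_ifs <;> first | rfl | omega
  have e2' : a ∘ (i.succ).succAbove = Function.update (a ∘ (i.castSucc).succAbove) i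
      (a i.castSucc) := by
    funext j
    rcases eq_or_ne j i with rfl | hne
    · rw [Function.update_self]
      simp only [Function.comp_apply, Fin.succAbove, Fin.lt_def, Fin.coe_castSucc,
        Fin.val_succ]
      rw [if_pos (by omega)]
    · rw [Function.update_of_ne hne]
      have hne' : (j : ℕ) ≠ (i : ℕ) := Fin.val_ne_of_ne hne
      simp only [Function.comp_apply, Fin.succAbove, Fin.lt_def, Fin.coe_castSucc,
        Fin.val_succ]
      split_ifs <;> first | rfl | omega
  have e3' : a ∘ (i.castSucc).succAbove = Function.update (a ∘ (i.castSucc).succAbove) i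
      (a i.succ) := by
    funext j
    rcases eq_or_ne j i with rfl | hne
    · rw [Function.update_self]
      simp only [Function.comp_apply, Fin.succAbove, Fin.lt_def, Fin.coe_castSucc]
      rw [if_neg (by omega)]
    · rw [Function.update_of_ne hne]
  have e1 : Fin.snoc (addIns a i) x
      = Function.update v i.castSucc (a i.castSucc + a i.succ) := by rw [e1', key]
  have e2 : Fin.snoc (a ∘ (i.succ).succAbove) x
      = Function.update v i.castSucc (a i.castSucc) := by rw [e2', key]
  have e3 : v = Function.update v i.castSucc (a i.succ) := by
    conv_lhs => rw [hv, e3', key]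
  rw [e1, AlternatingMap.map_update_add, ← e2, ← e3]

lemma snoc_update_last {n m : ℕ} (b : Fin m → EuclideanSpace ℝ (Fin n))
    (x y : EuclideanSpace ℝ (Fin n)) :
    Fin.snoc b y = Function.update (Fin.snoc b x : Fin (m+1) → EuclideanSpace ℝ (Fin n)) (Fin.last m) y := by
  funext j
  refine Fin.lastCases ?_ (fun jj => ?_) j
  · rw [Function.update_self, Fin.snoc_last]
  · rw [Function.update_of_ne (Fin.castSucc_lt_last jj).ne, Fin.snoc_castSucc,
      Fin.snoc_castSucc]

end MyAux

/-- (Stated with the degree of the form written as `m + 1 ≥ 1`.)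
Let `w` be an alternating `(m+1)`-form on `ℝⁿ` and let the group `G = (ℝⁿ, +)` act on
forms by pullback along translations.  For the cochain
`φ_m ∈ C^m(G, Ω⁰(ℝⁿ))`, `φ_m(a₁,…,a_m)(x) = [(−1)^{m−1}/(m+1)!]·w(a₁,…,a_m,x)`,
the function `δ'φ_m(a₁,…,a_{m+1}) : ℝⁿ → ℝ` is the constant function with value
`(1/(m+1)!)·w(a₁,…,a_{m+1})`. -/
theorem statement9 (n m : ℕ) (hmn : m + 1 ≤ n)
    (w : AlternatingMap ℝ (EuclideanSpace ℝ (Fin n)) ℝ (Fin (m + 1))) :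
    ∀ (a : Fin (m + 1) → EuclideanSpace ℝ (Fin n)) (x : EuclideanSpace ℝ (Fin n)),
      gdA pbT0
          (fun (b : Fin m → EuclideanSpace ℝ (Fin n)) (y : EuclideanSpace ℝ (Fin n)) =>
            ((-1 : ℝ) ^ (m + 1) / (Nat.factorial (m + 1) : ℝ)) * w (Fin.snoc b y))
          a x
        = (1 / (Nat.factorial (m + 1) : ℝ)) * w a := by
  intro a x
  set c : ℝ := (-1 : ℝ) ^ (m + 1) / (Nat.factorial (m + 1) : ℝ) with hc
  set F : Fin (m + 1) → ℝ := fun k => w (Fin.snoc (a ∘ k.succAbove) x) with hF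
  simp only [gdA, pbT0, Pi.add_apply, Finset.sum_apply, Pi.smul_apply, smul_eq_mul]
  have h0 : Fin.tail a = a ∘ (0 : Fin (m + 1)).succAbove := rfl
  have hL : Fin.init a = a ∘ (Fin.last m).succAbove := by
    funext j; simp [Fin.init]
  have hmid : ∀ i : Fin m,
      (-1 : ℝ) ^ ((i : ℕ) + 1) * (c * w (Fin.snoc (addIns a i) x))
        = c * ((-1 : ℝ) ^ ((i : ℕ) + 1) * (F i.succ + F i.castSucc)) := by
    intro i
    rw [splitAddIns n m w a x i]
    simp only [hF, Function.comp]
    ring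
  rw [Finset.sum_congr rfl (fun i _ => hmid i), ← Finset.mul_sum,
    telescope_aux m F]
  have hadd : w (Fin.snoc (Fin.init a) (x + a (Fin.last m)))
      = F (Fin.last m) + w a := by
    rw [snoc_update_last (Fin.init a) x (x + a (Fin.last m)),
      AlternatingMap.map_update_add]
    congr 1
    · rw [← snoc_update_last (Fin.init a) x x, hL]
    · rw [← snoc_update_last (Fin.init a) x (a (Fin.last m)), Fin.snoc_init_self]
  rw [hadd, h0]
  have hF0 : w (Fin.snoc (a ∘ (0 : Fin (m + 1)).succAbove) x) = F 0 := rfl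
  rw [hF0]
  have hsq : ((-1 : ℝ) ^ m) ^ 2 = 1 := by
    rw [← pow_mul]
    exact Even.neg_one_pow ⟨m, by ring⟩
  rw [hc]
  linear_combination ((w a) / (Nat.factorial (m + 1) : ℝ)) * hsq
end
end
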